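/- arXiv:1209.1165 — 3 statements merged into one kernel-verified Lean document; each statement's English description precedes it below -/
import Mathlib

section
/- Let K ≥ 1, let u be a continuously differentiable map from an open neighborhood of the closed unit disk D̄ into ℝ^K, and let α > 1. Suppose u is critical for the α-energy under inner variations by disk automorphisms, i.e. for every β : ℝ → ℂ differentiable at 0 with β(0) = 0, the function t ↦ E_α(u ∘ φ_{β(t)}) is differentiable at t = 0 with derivative 0. Then ∫_D ( −(1 + |∇u(z)|²)^α + α(1 + |∇u(z)|²)^{α−1}|∇u(z)|² )·z dA(z) = 0. -/
/-- The Möbius transformation `φ_β(z) = (z − β)/(1 − conj β · z)`. -/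
noncomputable def phi (β z : ℂ) : ℂ := (z - β) / (1 - (starRingEnd ℂ) β * z)

/-- `|∇u(z)|² = |∂u/∂x(z)|² + |∂u/∂y(z)|²` for a map `u : ℂ → ℝ^K`,
identifying `ℂ` with `ℝ²` via `z = x + iy`. -/
noncomputable def gradSq {K : ℕ} (u : ℂ → EuclideanSpace ℝ (Fin K)) (z : ℂ) : ℝ :=
  ‖fderiv ℝ u z 1‖ ^ 2 + ‖fderiv ℝ u z Complex.I‖ ^ 2


open Complex MeasureTheory Metric Set

namespace Stmt6Aux

lemma normSq_identity (β z : ℂ) :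
    normSq (1 - (starRingEnd ℂ) β * z) - normSq (z - β)
      = (1 - normSq β) * (1 - normSq z) := by
  simp only [normSq_apply, sub_re, sub_im, one_re, one_im, mul_re, mul_im,
    Complex.conj_re, Complex.conj_im]
  ring

lemma denom_ne {β z : ℂ} (hβ : normSq β < 1) (hz : normSq z ≤ 1) :
    1 - (starRingEnd ℂ) β * z ≠ 0 := by
  intro h
  have h1 : (1 : ℂ) = (starRingEnd ℂ) β * z := sub_eq_zero.mp h
  have h2 := congrArg normSq h1
  rw [normSq_mul, normSq_conj] at h2
  simp only [normSq_one] at h2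
  nlinarith [normSq_nonneg β, normSq_nonneg z]

lemma one_sub_normSq_ne {β : ℂ} (hβ : normSq β < 1) : (1 : ℂ) - (normSq β : ℂ) ≠ 0 := by
  have : ((1 - normSq β : ℝ) : ℂ) ≠ 0 := by
    rw [Complex.ofReal_ne_zero]; linarith
  simpa using this

lemma phi_normSq_lt {β z : ℂ} (hβ : normSq β < 1) (hz : normSq z < 1) :
    normSq (phi β z) < 1 := by
  have hd := denom_ne hβ hz.le
  have hdpos : 0 < normSq (1 - (starRingEnd ℂ) β * z) := normSq_pos.mpr hd
  rw [phi, map_div₀, div_lt_one hdpos]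
  nlinarith [normSq_identity β z, normSq_nonneg β, normSq_nonneg z]

lemma key_denom {β z : ℂ} (hβ : normSq β < 1) (hz : normSq z < 1) :
    1 - (starRingEnd ℂ) (-β) * phi β z
      = (1 - (normSq β : ℂ)) / (1 - (starRingEnd ℂ) β * z) := by
  have hd := denom_ne hβ hz.le
  rw [phi, map_neg]
  field_simp
  rw [normSq_eq_conj_mul_self]
  ring

lemma phi_phi {β z : ℂ} (hβ : normSq β < 1) (hz : normSq z < 1) :
    phi (-β) (phi β z) = z := by
  have hd := denom_ne hβ hz.le
  have hA : (1 : ℂ) - (normSq β : ℂ) ≠ 0 := one_sub_normSq_ne hβ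
  have num : phi β z - -β = z * ((1 - (normSq β : ℂ)) / (1 - (starRingEnd ℂ) β * z)) := by
    rw [phi, normSq_eq_conj_mul_self, sub_neg_eq_add, div_add' _ _ _ hd, mul_div_assoc']
    congr 1
    ring
  show (phi β z - -β) / (1 - (starRingEnd ℂ) (-β) * phi β z) = z
  rw [key_denom hβ hz, num, mul_div_assoc, div_self (div_ne_zero hA hd), mul_one]

lemma hasDerivAt_phi (β : ℂ) {z : ℂ} (hd : 1 - (starRingEnd ℂ) β * z ≠ 0) :
    HasDerivAt (phi β) ((1 - (normSq β : ℂ)) / (1 - (starRingEnd ℂ) β * z) ^ 2) z := by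
  have h1 : HasDerivAt (fun w : ℂ => w - β) 1 z := (hasDerivAt_id z).sub_const β
  have h2 : HasDerivAt (fun w : ℂ => 1 - (starRingEnd ℂ) β * w) (-((starRingEnd ℂ) β)) z := by
    simpa using (((hasDerivAt_id z).const_mul ((starRingEnd ℂ) β)).const_sub 1)
  have h3 := h1.div h2 hd
  refine h3.congr_deriv ?_
  rw [normSq_eq_conj_mul_self]
  ring

lemma norm_sq_apply_complex {K : ℕ} (L : ℂ →L[ℝ] EuclideanSpace ℝ (Fin K)) (c : ℂ) :
    ‖L c‖ ^ 2 + ‖L (Complex.I * c)‖ ^ 2 = normSq c * (‖L 1‖ ^ 2 + ‖L Complex.I‖ ^ 2) := by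
  have hc : c = c.re • (1 : ℂ) + c.im • Complex.I := by
    apply Complex.ext <;> simp
  have hic : Complex.I * c = (-c.im) • (1 : ℂ) + c.re • Complex.I := by
    apply Complex.ext <;> simp
  have h1 : L c = c.re • L 1 + c.im • L Complex.I := by
    conv_lhs => rw [hc]
    rw [map_add, L.map_smul, L.map_smul]
  have h2 : L (Complex.I * c) = (-c.im) • L 1 + c.re • L Complex.I := by
    conv_lhs => rw [hic]
    rw [map_add, L.map_smul, L.map_smul]
  rw [h1, h2, norm_add_sq_real, norm_add_sq_real,
    real_inner_smul_left, real_inner_smul_left, real_inner_smul_right, real_inner_smul_right,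
    norm_smul, norm_smul, norm_smul, norm_smul]
  simp only [Real.norm_eq_abs, mul_pow, _root_.sq_abs, normSq_apply]
  ring

lemma gradSq_nonneg {K : ℕ} (u : ℂ → EuclideanSpace ℝ (Fin K)) (z : ℂ) : 0 ≤ gradSq u z := by
  rw [gradSq]; positivity

lemma gradSq_comp {K : ℕ} (u : ℂ → EuclideanSpace ℝ (Fin K)) (φ : ℂ → ℂ) {z d : ℂ}
    (hφ : HasDerivAt φ d z) (hu : DifferentiableAt ℝ u (φ z)) :
    gradSq (fun w => u (φ w)) z = normSq d * gradSq u (φ z) := by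
  have hφ' : HasFDerivAt φ (((1 : ℂ →L[ℂ] ℂ).smulRight d).restrictScalars ℝ) z :=
    hφ.hasFDerivAt.restrictScalars ℝ
  have hcomp := hu.hasFDerivAt.comp z hφ'
  have h3 : fderiv ℝ (fun w => u (φ w)) z =
      (fderiv ℝ u (φ z)).comp (((1 : ℂ →L[ℂ] ℂ).smulRight d).restrictScalars ℝ) :=
    hcomp.fderiv
  rw [gradSq, gradSq, h3]
  simp only [ContinuousLinearMap.coe_comp', Function.comp_apply,
    ContinuousLinearMap.coe_restrictScalars', ContinuousLinearMap.smulRight_apply,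
    ContinuousLinearMap.one_apply, one_smul, smul_eq_mul]
  rw [one_mul]
  exact norm_sq_apply_complex (fderiv ℝ u (φ z)) d

lemma det_restrictScalars (c : ℂ) :
    (((1 : ℂ →L[ℂ] ℂ).smulRight c).restrictScalars ℝ).det = normSq c := by
  have h : ((((1 : ℂ →L[ℂ] ℂ).smulRight c).restrictScalars ℝ : ℂ →L[ℝ] ℂ) : ℂ →ₗ[ℝ] ℂ)
      = Algebra.lmul ℝ ℂ c := by
    apply LinearMap.ext; intro z
    simp [mul_comm]
  rw [ContinuousLinearMap.det, h, ← Algebra.norm_apply, Algebra.norm_complex_apply]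


/-- derivative of the inverse map `phi (-β)`. -/
noncomputable def ePsi (β w : ℂ) : ℂ :=
  (1 - (normSq β : ℂ)) / (1 + (starRingEnd ℂ) β * w) ^ 2

lemma mem_ball_iff_normSq {z : ℂ} : z ∈ ball (0 : ℂ) 1 ↔ normSq z < 1 := by
  rw [mem_ball_zero_iff]
  constructor <;> intro h <;> nlinarith [Complex.sq_norm z, norm_nonneg z]

lemma hasDerivAt_psi {β w : ℂ} (hβ : normSq β < 1) (hw : normSq w ≤ 1) :
    HasDerivAt (phi (-β)) (ePsi β w) w := by
  have hd : 1 - (starRingEnd ℂ) (-β) * w ≠ 0 := by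
    rw [← normSq_neg] at hβ
    exact denom_ne hβ hw
  have := hasDerivAt_phi (-β) hd
  simpa [ePsi, normSq_neg, sub_neg_eq_add] using this

lemma psi_image (hβ : normSq β < 1) :
    phi (-β) '' ball (0 : ℂ) 1 = ball (0 : ℂ) 1 := by
  have hβ' : normSq (-β) < 1 := by rwa [normSq_neg]
  ext w
  constructor
  · rintro ⟨z, hz, rfl⟩
    rw [mem_ball_iff_normSq] at hz ⊢
    exact phi_normSq_lt hβ' hz
  · intro hw
    rw [mem_ball_iff_normSq] at hw
    exact ⟨phi β w, mem_ball_iff_normSq.mpr (phi_normSq_lt hβ hw), phi_phi hβ hw⟩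

lemma psi_injOn (hβ : normSq β < 1) : InjOn (phi (-β)) (ball (0 : ℂ) 1) := by
  have hβ' : normSq (-β) < 1 := by rwa [normSq_neg]
  intro a ha b hb hab
  rw [mem_ball_iff_normSq] at ha hb
  have h1 : phi (-(-β)) (phi (-β) a) = a := phi_phi hβ' ha
  have h2 : phi (-(-β)) (phi (-β) b) = b := phi_phi hβ' hb
  rw [← h1, ← h2, hab]

lemma dphi_mul_ePsi {β w : ℂ} (hβ : normSq β < 1) (hw : normSq w < 1) :
    ((1 - (normSq β : ℂ)) / (1 - (starRingEnd ℂ) β * phi (-β) w) ^ 2) * ePsi β w = 1 := by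
  have hβ' : normSq (-β) < 1 := by rwa [normSq_neg]
  have hkey := key_denom (β := -β) hβ' hw
  simp only [neg_neg, normSq_neg, map_neg, neg_mul, sub_neg_eq_add] at hkey
  rw [hkey, ePsi]
  have h1 : (1 : ℂ) + (starRingEnd ℂ) β * w ≠ 0 := by
    have := denom_ne hβ' hw.le
    rwa [map_neg, neg_mul, sub_neg_eq_add] at this
  have h2 := one_sub_normSq_ne hβ
  field_simp

lemma cov {K : ℕ} (u : ℂ → EuclideanSpace ℝ (Fin K)) {V : Set ℂ}
    (hV : IsOpen V) (hDV : closedBall (0 : ℂ) 1 ⊆ V) (hu : ContDiffOn ℝ 1 u V)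
    (α : ℝ) {β : ℂ} (hβ : normSq β < 1) :
    ∫ z in ball (0 : ℂ) 1, (1 + gradSq (fun w => u (phi β w)) z) ^ α
      = ∫ w in ball (0 : ℂ) 1,
          normSq (ePsi β w) * (1 + gradSq u w / normSq (ePsi β w)) ^ α := by
  have hβ' : normSq (-β) < 1 := by rwa [normSq_neg]
  set H : ℂ → ℝ := fun z => (1 + gradSq (fun w => u (phi β w)) z) ^ α with hH
  have hf' : ∀ w ∈ ball (0 : ℂ) 1,
      HasFDerivWithinAt (phi (-β))
        (((1 : ℂ →L[ℂ] ℂ).smulRight (ePsi β w)).restrictScalars ℝ) (ball (0 : ℂ) 1) w :=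
    fun w hw => (((hasDerivAt_psi hβ
      (mem_ball_iff_normSq.mp hw).le).hasFDerivAt).restrictScalars ℝ).hasFDerivWithinAt
  have hCOV := integral_image_eq_integral_abs_det_fderiv_smul volume measurableSet_ball
    hf' (psi_injOn hβ) H
  rw [psi_image hβ] at hCOV
  rw [hCOV]
  apply setIntegral_congr_fun measurableSet_ball
  intro w hw
  rw [mem_ball_iff_normSq] at hw
  have hψw : normSq (phi (-β) w) < 1 := phi_normSq_lt hβ' hw
  have hphiψ : phi β (phi (-β) w) = w := by
    have := phi_phi (β := -β) hβ' hw
    rwa [neg_neg] at this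
  have hud : DifferentiableAt ℝ u (phi β (phi (-β) w)) := by
    rw [hphiψ]
    exact (hu.differentiableOn one_ne_zero w
      (hDV (ball_subset_closedBall (mem_ball_iff_normSq.mpr hw)))).differentiableAt
      (hV.mem_nhds (hDV (ball_subset_closedBall (mem_ball_iff_normSq.mpr hw))))
  have hdphi : HasDerivAt (phi β)
      ((1 - (normSq β : ℂ)) / (1 - (starRingEnd ℂ) β * phi (-β) w) ^ 2) (phi (-β) w) :=
    hasDerivAt_phi β (denom_ne hβ hψw.le)
  have hgrad := gradSq_comp u (phi β) hdphi hud
  have hmul : normSq ((1 - (normSq β : ℂ)) / (1 - (starRingEnd ℂ) β * phi (-β) w) ^ 2)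
      * normSq (ePsi β w) = 1 := by
    rw [← normSq_mul, dphi_mul_ePsi hβ hw, normSq_one]
  have hval : normSq ((1 - (normSq β : ℂ)) / (1 - (starRingEnd ℂ) β * phi (-β) w) ^ 2)
      = (normSq (ePsi β w))⁻¹ :=
    eq_inv_of_mul_eq_one_left hmul
  show |(((1 : ℂ →L[ℂ] ℂ).smulRight (ePsi β w)).restrictScalars ℝ).det| • H (phi (-β) w)
      = normSq (ePsi β w) * (1 + gradSq u w / normSq (ePsi β w)) ^ α
  have hHval : H (phi (-β) w) = (1 + gradSq (fun w => u (phi β w)) (phi (-β) w)) ^ α := rfl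
  rw [det_restrictScalars, _root_.abs_of_nonneg (normSq_nonneg _), smul_eq_mul, hHval]
  rw [hgrad, hphiψ, hval, div_eq_mul_inv, mul_comm (gradSq u w)]

noncomputable def nb (c : ℂ) (t : ℝ) (w : ℂ) : ℝ :=
  1 + 2*t*((starRingEnd ℂ) c * w).re + t^2 * normSq ((starRingEnd ℂ) c * w)

noncomputable def rr (c : ℂ) (t : ℝ) (w : ℂ) : ℝ :=
  (1 - t^2 * normSq c)^2 / (nb c t w)^2

noncomputable def rr' (c : ℂ) (t : ℝ) (w : ℂ) : ℝ :=
  ((-(4*t*normSq c))*(1 - t^2*normSq c) * nb c t w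
    - (1 - t^2*normSq c)^2 * (4*(((starRingEnd ℂ) c * w).re
        + t*normSq ((starRingEnd ℂ) c * w)))) / nb c t w ^ 3

lemma normSq_one_add_smul (t : ℝ) (y : ℂ) :
    normSq (1 + t • y) = 1 + 2*t*y.re + t^2 * normSq y := by
  simp only [normSq_apply, add_re, add_im, one_re, one_im, Complex.real_smul,
    mul_re, mul_im, Complex.ofReal_re, Complex.ofReal_im]
  ring

lemma nb_eq_normSq (c : ℂ) (t : ℝ) (w : ℂ) :
    nb c t w = normSq (1 + t • ((starRingEnd ℂ) c * w)) :=
  (normSq_one_add_smul t _).symm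

lemma nb_zero (c : ℂ) (w : ℂ) : nb c 0 w = 1 := by simp [nb]

lemma rr_zero (c : ℂ) (w : ℂ) : rr c 0 w = 1 := by simp [rr, nb_zero]

lemma nb_pos {c : ℂ} {t : ℝ} {w : ℂ}
    (h : |t| * ‖c‖ * ‖w‖ < 1) : 0 < nb c t w := by
  rw [nb_eq_normSq]
  apply normSq_pos.mpr
  intro heq
  have h1 : t • ((starRingEnd ℂ) c * w) = -1 := by
    have := heq
    linear_combination this
  have h2 := congrArg norm h1
  rw [Complex.real_smul] at h2
  rw [norm_mul, norm_mul, Complex.norm_real, Real.norm_eq_abs, norm_neg, norm_one, Complex.norm_conj] at h2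
  rw [← h2, ← mul_assoc] at h
  exact lt_irrefl _ h

lemma sq_lt_one_of {c : ℂ} {t : ℝ} (h2 : |t| * ‖c‖ < 1) :
    t^2 * normSq c < 1 := by
  have key : t^2 * normSq c = (|t| * ‖c‖)^2 := by
    rw [← Complex.sq_norm, mul_pow, _root_.sq_abs]
  rw [key]
  nlinarith [mul_nonneg (abs_nonneg t) (norm_nonneg c)]

lemma rr_pos {c : ℂ} {t : ℝ} {w : ℂ} (h : |t| * ‖c‖ * ‖w‖ < 1)
    (h2 : |t| * ‖c‖ < 1) : 0 < rr c t w := by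
  apply div_pos
  · exact pow_pos (by linarith [sq_lt_one_of h2]) 2
  · exact pow_pos (nb_pos h) 2

lemma hasDerivAt_rr (c : ℂ) (w : ℂ) {t : ℝ} (hnb : nb c t w ≠ 0) :
    HasDerivAt (fun s => rr c s w) (rr' c t w) t := by
  have hx : HasDerivAt (fun s : ℝ => 1 - s^2*normSq c) (-(2*t*normSq c)) t := by
    simpa using ((hasDerivAt_pow 2 t).mul_const (normSq c)).const_sub 1
  have hA : HasDerivAt (fun s : ℝ => (1 - s^2*normSq c)^2)
      (2*(1 - t^2*normSq c)*(-(2*t*normSq c))) t := by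
    simpa [pow_one, Pi.pow_def] using hx.pow 2
  have hnb' : HasDerivAt (fun s => nb c s w)
      (2*((starRingEnd ℂ) c * w).re + 2*t*normSq ((starRingEnd ℂ) c * w)) t := by
    unfold nb
    have l1 : HasDerivAt (fun s : ℝ => 2*s*((starRingEnd ℂ) c * w).re)
        (2*((starRingEnd ℂ) c * w).re) t := by
      simpa using ((hasDerivAt_id t).const_mul (2:ℝ)).mul_const (((starRingEnd ℂ) c * w).re)
    have l2 : HasDerivAt (fun s : ℝ => s^2 * normSq ((starRingEnd ℂ) c * w))
        (2*t*normSq ((starRingEnd ℂ) c * w)) t := by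
      simpa [pow_one, mul_assoc] using (hasDerivAt_pow 2 t).mul_const (normSq ((starRingEnd ℂ) c * w))
    simpa [add_assoc] using ((l1.add l2).const_add 1)
  have hB : HasDerivAt (fun s => nb c s w ^ 2)
      (2*nb c t w*(2*((starRingEnd ℂ) c * w).re + 2*t*normSq ((starRingEnd ℂ) c * w))) t := by
    simpa [pow_one, mul_assoc, Pi.pow_def] using hnb'.pow 2
  have h := hA.div hB (pow_ne_zero 2 hnb)
  refine h.congr_deriv ?_
  unfold rr'
  field_simp
  ring

lemma hasDerivAt_F (c : ℂ) (w : ℂ) (g : ℂ → ℝ) (hg : 0 ≤ g w) {α t : ℝ}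
    (hnb : nb c t w ≠ 0) (hrr : 0 < rr c t w) :
    HasDerivAt (fun s => rr c s w * (1 + g w / rr c s w) ^ α)
      (rr' c t w * ((1 + g w / rr c t w) ^ α
        - α * (1 + g w / rr c t w) ^ (α-1) * (g w / rr c t w))) t := by
  have hr := hasDerivAt_rr c w hnb
  have hq : HasDerivAt (fun s => 1 + g w / rr c s w)
      ((0 * rr c t w - g w * rr' c t w) / rr c t w ^ 2) t :=
    ((hasDerivAt_const t (g w)).div hr hrr.ne').const_add 1
  have hbase_pos : 0 < 1 + g w / rr c t w := by positivity
  have hpow := hq.rpow_const (p := α) (Or.inl hbase_pos.ne')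
  have hmul := hr.mul hpow
  refine hmul.congr_deriv ?_
  have hrne := hrr.ne'
  generalize (1 + g w / rr c t w) ^ α = X
  generalize (1 + g w / rr c t w) ^ (α - 1) = Y
  field_simp
  ring

lemma rr'_zero (c : ℂ) (w : ℂ) : rr' c 0 w = -(4*((starRingEnd ℂ) c * w).re) := by
  simp [rr', nb_zero]

lemma main_deriv (c : ℂ) (g : ℂ → ℝ) (hg0 : ∀ w, 0 ≤ g w)
    (hgc : ContinuousOn g (closedBall (0:ℂ) 1)) (α : ℝ) (hα : 1 ≤ α) :
    HasDerivAt (fun t : ℝ => ∫ w in ball (0:ℂ) 1, rr c t w * (1 + g w / rr c t w) ^ α)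
      (∫ w in ball (0:ℂ) 1,
        (-(4*((starRingEnd ℂ) c * w).re)) * ((1 + g w)^α - α*(1 + g w)^(α-1) * g w)) 0 := by
  set δ : ℝ := (2*(‖c‖ + 1))⁻¹ with hδ
  have hδpos : 0 < δ := by rw [hδ]; positivity
  have hδc : ∀ t : ℝ, |t| ≤ δ → |t| * ‖c‖ < 1 := by
    intro t ht
    have h2 : δ * ‖c‖ < 1 := by
      rw [hδ, inv_mul_eq_div, div_lt_one (by positivity)]
      linarith [norm_nonneg c]
    calc |t| * ‖c‖ ≤ δ * ‖c‖ :=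
          mul_le_mul_of_nonneg_right ht (norm_nonneg c)
      _ < 1 := h2
  have hcond : ∀ t : ℝ, |t| ≤ δ → ∀ w : ℂ, ‖w‖ ≤ 1 →
      |t| * ‖c‖ * ‖w‖ < 1 := by
    intro t ht w hw
    calc |t| * ‖c‖ * ‖w‖ ≤ |t| * ‖c‖ * 1 := by
          apply mul_le_mul_of_nonneg_left hw
          positivity
      _ < 1 := by rw [mul_one]; exact hδc t ht
  set S : Set (ℝ × ℂ) := Icc (-δ) δ ×ˢ closedBall (0:ℂ) 1 with hS
  have hScompact : IsCompact S := isCompact_Icc.prod (isCompact_closedBall _ _)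
  have hmemS : ∀ p : ℝ × ℂ, p ∈ S → |p.1| ≤ δ ∧ ‖p.2‖ ≤ 1 := by
    intro p hp
    refine ⟨abs_le.mpr ⟨hp.1.1, hp.1.2⟩, ?_⟩
    have := hp.2
    rwa [Metric.mem_closedBall, Complex.dist_eq, sub_zero] at this
  have hnbpos : ∀ p : ℝ × ℂ, p ∈ S → 0 < nb c p.1 p.2 := fun p hp =>
    nb_pos (hcond p.1 (hmemS p hp).1 p.2 (hmemS p hp).2)
  have hrrpos : ∀ p : ℝ × ℂ, p ∈ S → 0 < rr c p.1 p.2 := fun p hp =>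
    rr_pos (hcond p.1 (hmemS p hp).1 p.2 (hmemS p hp).2) (hδc p.1 (hmemS p hp).1)
  -- continuity
  have c1 : Continuous fun p : ℝ × ℂ => ((starRingEnd ℂ) c * p.2).re :=
    Complex.continuous_re.comp (continuous_const.mul continuous_snd)
  have c2 : Continuous fun p : ℝ × ℂ => normSq ((starRingEnd ℂ) c * p.2) :=
    Complex.continuous_normSq.comp (continuous_const.mul continuous_snd)
  have hnbcont : Continuous (fun p : ℝ × ℂ => nb c p.1 p.2) := by
    unfold nb
    exact (continuous_const.add ((continuous_const.mul continuous_fst).mul c1)).add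
      ((continuous_fst.pow 2).mul c2)
  have hAcont : Continuous (fun p : ℝ × ℂ => (1 - p.1^2*normSq c)^2) :=
    ((continuous_const.sub ((continuous_fst.pow 2).mul continuous_const)).pow 2)
  have hrrcont : ContinuousOn (fun p : ℝ × ℂ => rr c p.1 p.2) S := by
    apply ContinuousOn.div hAcont.continuousOn ((hnbcont.pow 2).continuousOn)
    exact fun p hp => pow_ne_zero 2 (hnbpos p hp).ne'
  have hrr'cont : ContinuousOn (fun p : ℝ × ℂ => rr' c p.1 p.2) S := by
    apply ContinuousOn.div _ ((hnbcont.pow 3).continuousOn)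
      (fun p hp => pow_ne_zero 3 (hnbpos p hp).ne')
    apply Continuous.continuousOn
    apply Continuous.sub
    · exact ((((continuous_const.mul continuous_fst).mul continuous_const).neg.mul
          (continuous_const.sub ((continuous_fst.pow 2).mul continuous_const))).mul hnbcont)
    · exact ((continuous_const.sub ((continuous_fst.pow 2).mul continuous_const)).pow 2).mul
        (continuous_const.mul (c1.add (continuous_fst.mul c2)))
  have hgScont : ContinuousOn (fun p : ℝ × ℂ => g p.2) S :=
    hgc.comp continuous_snd.continuousOn (fun p hp => hp.2)
  have hrrne : ∀ p ∈ S, rr c p.1 p.2 ≠ 0 := fun p hp => (hrrpos p hp).ne'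
  have hbasecont : ContinuousOn (fun p : ℝ × ℂ => 1 + g p.2 / rr c p.1 p.2) S :=
    continuousOn_const.add (hgScont.div hrrcont hrrne)
  have hbasepos : ∀ p ∈ S, (0:ℝ) < 1 + g p.2 / rr c p.1 p.2 := by
    intro p hp
    have := hg0 p.2
    have := hrrpos p hp
    positivity
  have hpow1 : ContinuousOn (fun p : ℝ × ℂ => (1 + g p.2 / rr c p.1 p.2) ^ α) S :=
    hbasecont.rpow_const (fun p hp => Or.inl (hbasepos p hp).ne')
  have hpow2 : ContinuousOn (fun p : ℝ × ℂ => (1 + g p.2 / rr c p.1 p.2) ^ (α-1)) S :=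
    hbasecont.rpow_const (fun p hp => Or.inl (hbasepos p hp).ne')
  set F : ℝ → ℂ → ℝ := fun t w => rr c t w * (1 + g w / rr c t w) ^ α with hF
  set F' : ℝ → ℂ → ℝ := fun t w => rr' c t w * ((1 + g w / rr c t w) ^ α
      - α * (1 + g w / rr c t w) ^ (α-1) * (g w / rr c t w)) with hF'
  have hFcont : ContinuousOn (fun p : ℝ × ℂ => F p.1 p.2) S := hrrcont.mul hpow1
  have hF'cont : ContinuousOn (fun p : ℝ × ℂ => F' p.1 p.2) S :=
    hrr'cont.mul (hpow1.sub ((continuousOn_const.mul hpow2).mul (hgScont.div hrrcont hrrne)))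
  obtain ⟨C, hC⟩ := hScompact.exists_bound_of_continuousOn hF'cont
  have hball_mem : ∀ t : ℝ, t ∈ ball (0:ℝ) δ → ∀ w : ℂ, w ∈ ball (0:ℂ) 1 → ((t, w) : ℝ × ℂ) ∈ S := by
    intro t ht w hw
    constructor
    · have : |t| < δ := by rwa [Metric.mem_ball, Real.dist_eq, sub_zero] at ht
      exact ⟨by linarith [neg_abs_le t, this], by linarith [le_abs_self t]⟩
    · exact ball_subset_closedBall hw
  have hmeas : ∀ᶠ t in nhds (0:ℝ), AEStronglyMeasurable (F t) (volume.restrict (ball (0:ℂ) 1)) := by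
    apply Filter.eventually_of_mem (Metric.ball_mem_nhds (0:ℝ) hδpos)
    intro t ht
    apply ContinuousOn.aestronglyMeasurable _ measurableSet_ball
    have hmap : MapsTo (fun w : ℂ => ((t, w) : ℝ × ℂ)) (ball (0:ℂ) 1) S :=
      fun w hw => hball_mem t ht w hw
    have h2 := hFcont.comp (Continuous.continuousOn
      (continuous_const.prodMk continuous_id)) hmap
    exact h2
  have hzero_mem : ∀ w : ℂ, w ∈ ball (0:ℂ) 1 → ((0:ℝ), w) ∈ S :=
    fun w hw => hball_mem 0 (mem_ball_self hδpos) w hw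
  have hint : Integrable (F 0) (volume.restrict (ball (0:ℂ) 1)) := by
    have hFeq : F 0 = fun w => (1 + g w) ^ α := by
      funext w
      simp [hF, rr_zero]
    rw [hFeq]
    apply IntegrableOn.mono_set _ ball_subset_closedBall
    apply ContinuousOn.integrableOn_compact (isCompact_closedBall _ _)
    apply (continuousOn_const.add hgc).rpow_const
    intro w hw
    exact Or.inl (by have := hg0 w; show (1:ℝ) + g w ≠ 0; positivity)
  have hmeas' : AEStronglyMeasurable (F' 0) (volume.restrict (ball (0:ℂ) 1)) := by
    apply ContinuousOn.aestronglyMeasurable _ measurableSet_ball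
    have hmap : MapsTo (fun w : ℂ => (((0:ℝ), w) : ℝ × ℂ)) (ball (0:ℂ) 1) S := hzero_mem
    have h2 := hF'cont.comp (Continuous.continuousOn
      (continuous_const.prodMk continuous_id)) hmap
    exact h2
  have hbound : ∀ᵐ w ∂(volume.restrict (ball (0:ℂ) 1)),
      ∀ t ∈ ball (0:ℝ) δ, ‖F' t w‖ ≤ C := by
    filter_upwards [self_mem_ae_restrict measurableSet_ball] with w hw
    intro t ht
    exact hC (t, w) (hball_mem t ht w hw)
  have hbint : Integrable (fun _ : ℂ => C) (volume.restrict (ball (0:ℂ) 1)) := by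
    apply integrable_const_iff.mpr
    right
    exact ⟨by rw [Measure.restrict_apply_univ]; exact measure_ball_lt_top⟩
  have hdiff : ∀ᵐ w ∂(volume.restrict (ball (0:ℂ) 1)),
      ∀ t ∈ ball (0:ℝ) δ, HasDerivAt (fun s => F s w) (F' t w) t := by
    filter_upwards [self_mem_ae_restrict measurableSet_ball] with w hw
    intro t ht
    have hp := hball_mem t ht w hw
    exact hasDerivAt_F c w g (hg0 w) (hnbpos (t, w) hp).ne' (hrrpos (t, w) hp)
  have main := (hasDerivAt_integral_of_dominated_loc_of_deriv_le (Metric.ball_mem_nhds (0:ℝ) hδpos) hmeas hint hmeas'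
    hbound hbint hdiff).2
  have hF'eq : F' 0 = fun w =>
      (-(4*((starRingEnd ℂ) c * w).re)) * ((1 + g w)^α - α*(1 + g w)^(α-1) * g w) := by
    funext w
    simp [hF', rr_zero, rr'_zero]
  rw [hF'eq] at main
  exact main

lemma normSq_real_smul (t : ℝ) (c : ℂ) : normSq (t • c) = t^2 * normSq c := by
  rw [Complex.real_smul, normSq_mul, normSq_ofReal]; ring

lemma normSq_ePsi (c : ℂ) (t : ℝ) (w : ℂ) : normSq (ePsi (t • c) w) = rr c t w := by
  have h2 : (starRingEnd ℂ) (t • c) * w = t • ((starRingEnd ℂ) c * w) := by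
    rw [Complex.real_smul, Complex.real_smul, map_mul, Complex.conj_ofReal]; ring
  rw [ePsi, map_div₀, map_pow, normSq_real_smul, h2, rr, ← nb_eq_normSq]
  congr 1
  have h3 : (1 : ℂ) - ((t^2*normSq c : ℝ) : ℂ) = (((1 - t^2*normSq c : ℝ)) : ℂ) := by
    push_cast; ring
  rw [h3, normSq_ofReal]
  ring

lemma gradSq_continuousOn {K : ℕ} (u : ℂ → EuclideanSpace ℝ (Fin K)) {V : Set ℂ}
    (hV : IsOpen V) (hu : ContDiffOn ℝ 1 u V) : ContinuousOn (gradSq u) V := by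
  have h1 : ContinuousOn (fderiv ℝ u) V := hu.continuousOn_fderiv_of_isOpen hV le_rfl
  have e1 : ContinuousOn (fun z => fderiv ℝ u z 1) V := h1.clm_apply continuousOn_const
  have e2 : ContinuousOn (fun z => fderiv ℝ u z Complex.I) V := h1.clm_apply continuousOn_const
  exact ((e1.norm.pow 2).add (e2.norm.pow 2))

end Stmt6Aux

open Stmt6Aux

/-- If `u` is critical for the `α`-energy under inner variations by disk automorphisms
(i.e. for every variation `β` with `β 0 = 0` the function `t ↦ E_α(u ∘ φ_{β t})` has
derivative `0` at `t = 0`), then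
`∫_D ( −(1+|∇u|²)^α + α(1+|∇u|²)^{α−1}|∇u|² )·z dA = 0`.  (Lemma 4.1.) -/
theorem stmt_6 (K : ℕ) (hK : 1 ≤ K) (u : ℂ → EuclideanSpace ℝ (Fin K)) (V : Set ℂ)
    (hV : IsOpen V) (hDV : Metric.closedBall (0 : ℂ) 1 ⊆ V) (hu : ContDiffOn ℝ 1 u V)
    (α : ℝ) (hα : 1 < α)
    (hcrit : ∀ β : ℝ → ℂ, ∀ β' : ℂ, HasDerivAt β β' 0 → β 0 = 0 →
      HasDerivAt
        (fun t : ℝ =>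
          ∫ z in Metric.ball (0 : ℂ) 1, (1 + gradSq (fun w => u (phi (β t) w)) z) ^ α)
        0 0) :
    (∫ z in Metric.ball (0 : ℂ) 1,
        ((-(1 + gradSq u z) ^ α + α * (1 + gradSq u z) ^ (α - 1) * gradSq u z : ℝ) : ℂ)
          * z) = 0 := by
  set g : ℂ → ℝ := gradSq u with hg
  have hg0 : ∀ w, 0 ≤ g w := gradSq_nonneg u
  have hgc : ContinuousOn g (closedBall (0:ℂ) 1) :=
    (gradSq_continuousOn u hV hu).mono hDV
  set h : ℂ → ℝ := fun w => (1 + g w)^α - α*(1 + g w)^(α-1) * g w with hh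
  have key : ∀ c : ℂ,
      (∫ w in ball (0:ℂ) 1, ((starRingEnd ℂ) c * w).re * h w) = 0 := by
    intro c
    have hβd : HasDerivAt (fun t : ℝ => t • c) c 0 := by
      simpa using (hasDerivAt_id (0:ℝ)).smul_const c
    have hE := hcrit (fun t => t • c) c hβd (zero_smul _ _)
    set δ : ℝ := (2*(‖c‖ + 1))⁻¹ with hδ
    have hδpos : 0 < δ := by rw [hδ]; positivity
    have hEG : (fun t : ℝ => ∫ z in ball (0:ℂ) 1,
          (1 + gradSq (fun w => u (phi (t • c) w)) z)^α)
        =ᶠ[nhds (0:ℝ)] (fun t => ∫ w in ball (0:ℂ) 1, rr c t w * (1 + g w / rr c t w)^α) := by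
      apply Filter.eventually_of_mem (Metric.ball_mem_nhds (0:ℝ) hδpos)
      intro t ht
      have htδ : |t| < δ := by rwa [Metric.mem_ball, Real.dist_eq, sub_zero] at ht
      have htc : |t| * ‖c‖ < 1 := by
        have h2 : δ * ‖c‖ < 1 := by
          rw [hδ, inv_mul_eq_div, div_lt_one (by positivity)]
          linarith [norm_nonneg c]
        nlinarith [norm_nonneg c, abs_nonneg t]
      have hts : normSq (t • c) < 1 := by
        rw [normSq_real_smul]
        exact sq_lt_one_of htc
      show (∫ z in ball (0:ℂ) 1, (1 + gradSq (fun w => u (phi (t • c) w)) z)^α)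
        = ∫ w in ball (0:ℂ) 1, rr c t w * (1 + g w / rr c t w)^α
      rw [cov u hV hDV hu α hts]
      simp_rw [normSq_ePsi]
      rfl
    have hG0 : HasDerivAt
        (fun t => ∫ w in ball (0:ℂ) 1, rr c t w * (1 + g w / rr c t w)^α) 0 0 :=
      hE.congr_of_eventuallyEq hEG.symm
    have hGD := main_deriv c g hg0 hgc α hα.le
    have hD0 := hGD.unique hG0
    have hpull : (∫ w in ball (0:ℂ) 1,
        (-(4*((starRingEnd ℂ) c * w).re)) * ((1 + g w)^α - α*(1 + g w)^(α-1) * g w))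
        = (-4) * ∫ w in ball (0:ℂ) 1, ((starRingEnd ℂ) c * w).re * h w := by
      rw [← integral_const_mul]
      apply setIntegral_congr_fun measurableSet_ball
      intro w _
      rw [hh]
      ring
    rw [hpull] at hD0
    linarith
  -- integrability of the complex integrand
  have hhc : ContinuousOn h (closedBall (0:ℂ) 1) := by
    have hb : ContinuousOn (fun w => 1 + g w) (closedBall (0:ℂ) 1) :=
      continuousOn_const.add hgc
    have hne : ∀ w ∈ closedBall (0:ℂ) 1, (1 + g w) ≠ 0 ∨ (0:ℝ) ≤ α :=
      fun w _ => Or.inl (by have := hg0 w; positivity)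
    exact (hb.rpow_const hne).sub
      ((continuousOn_const.mul (hb.rpow_const (fun w _ =>
        Or.inl (by have := hg0 w; positivity)))).mul hgc)
  have hI : Integrable (fun z => (-(h z)) • z) (volume.restrict (ball (0:ℂ) 1)) := by
    apply IntegrableOn.mono_set _ ball_subset_closedBall
    apply ContinuousOn.integrableOn_compact (isCompact_closedBall _ _)
    exact (hhc.neg.smul continuousOn_id)
  have hIeq : (∫ z in ball (0:ℂ) 1,
        ((-(1 + gradSq u z) ^ α + α * (1 + gradSq u z) ^ (α - 1) * gradSq u z : ℝ) : ℂ) * z)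
      = ∫ z in ball (0:ℂ) 1, (-(h z)) • z := by
    apply setIntegral_congr_fun measurableSet_ball
    intro z _
    simp only [hh, Complex.real_smul]
    push_cast
    ring
  rw [hIeq]
  apply Complex.ext
  · have hre := integral_re hI
    simp only [RCLike.re_to_complex] at hre
    rw [Complex.zero_re, ← hre]
    have : ∀ z : ℂ, ((-(h z)) • z).re = -(z.re * h z) := by
      intro z
      rw [Complex.smul_re, smul_eq_mul]; ring
    simp_rw [this]
    rw [integral_neg]
    have hk := key 1
    simp only [map_one, one_mul] at hk
    simp only [neg_eq_zero]
    exact hk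
  · have him := integral_im hI
    simp only [RCLike.im_to_complex] at him
    rw [Complex.zero_im, ← him]
    have : ∀ z : ℂ, ((-(h z)) • z).im = -(z.im * h z) := by
      intro z
      rw [Complex.smul_im, smul_eq_mul]; ring
    simp_rw [this]
    rw [integral_neg]
    have hk := key Complex.I
    have h2 : ∀ w : ℂ, ((starRingEnd ℂ) Complex.I * w).re = w.im := fun w => by
      simp [Complex.mul_re]
    simp_rw [h2] at hk
    simp only [neg_eq_zero]
    exact hk
end

section
/- For every real α with 1 ≤ α ≤ 2 and every real s ≥ 0, one has (α/2)(α − 1)·s²·(1 + s)^{α−2} ≤ −(1 + s)^α + 1 + α(1 + s)^{α−1}·s ≤ (α − 1)·s²·(1 + s)^{α−2}. -/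
private lemma hasDerivAt_rpow_shift (β x : ℝ) (hx : 0 < 1 + x) :
    HasDerivAt (fun y : ℝ => (1 + y) ^ β) (β * (1 + x) ^ (β - 1)) x := by
  have h := HasDerivAt.rpow_const (p := β) ((hasDerivAt_id x).const_add 1) (Or.inl hx.ne')
  simpa [mul_comm] using h

/-- Derivative of the central function `F`. -/
private lemma hasDerivAt_F (α x : ℝ) (hx : 0 < 1 + x) :
    HasDerivAt (fun y : ℝ => -(1 + y) ^ α + 1 + α * (1 + y) ^ (α - 1) * y)
      (α * (α - 1) * x * (1 + x) ^ (α - 2)) x := by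
  have hA := hasDerivAt_rpow_shift α x hx
  have hB := hasDerivAt_rpow_shift (α - 1) x hx
  have h := (hA.neg.add_const 1).add (((hB.const_mul α)).mul (hasDerivAt_id x))
  have e1 : (1 + x) ^ (α - 1) = (1 + x) ^ (α - 2) * (1 + x) := by
    rw [show α - 1 = (α - 2) + 1 by ring, Real.rpow_add hx, Real.rpow_one]
  convert h using 1
  · rfl
  · rfl
  · rfl
  rw [show α - 1 - 1 = α - 2 by ring, e1]
  simp only [id_eq]
  ring

/-- Derivative of `x ↦ c * x^2 * (1+x)^(α-2)`. -/
private lemma hasDerivAt_Q (α c x : ℝ) (hx : 0 < 1 + x) :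
    HasDerivAt (fun y : ℝ => c * y ^ 2 * (1 + y) ^ (α - 2))
      (c * (2 * x * (1 + x) ^ (α - 2) + x ^ 2 * ((α - 2) * (1 + x) ^ (α - 3)))) x := by
  have hC := hasDerivAt_rpow_shift (α - 2) x hx
  have hsq : HasDerivAt (fun y : ℝ => c * y ^ 2) (c * (2 * x)) x := by
    simpa using ((hasDerivAt_pow 2 x).const_mul c)
  have h := hsq.mul hC
  convert h using 1
  · rfl
  · rfl
  · rfl
  rw [show α - 2 - 1 = α - 3 by ring]
  ring

private lemma key (α : ℝ) (h1 : 1 ≤ α) (h2 : α ≤ 2) (c : ℝ) (hc0 : 0 ≤ c) :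
    ∀ s : ℝ, 0 ≤ s →
      ((∀ x : ℝ, 0 ≤ x →
          0 ≤ α * (α - 1) * x * (1 + x) ^ (α - 2)
              - c * (2 * x * (1 + x) ^ (α - 2) + x ^ 2 * ((α - 2) * (1 + x) ^ (α - 3)))) →
        c * s ^ 2 * (1 + s) ^ (α - 2) ≤ -(1 + s) ^ α + 1 + α * (1 + s) ^ (α - 1) * s) := by
  intro s hs hsign
  set G : ℝ → ℝ := fun y => -(1 + y) ^ α + 1 + α * (1 + y) ^ (α - 1) * y
      - c * y ^ 2 * (1 + y) ^ (α - 2) with hGdef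
  have hpos : ∀ x : ℝ, x ∈ Set.Ici (0 : ℝ) → (0 : ℝ) < 1 + x := fun x hx => by
    simp only [Set.mem_Ici] at hx; linarith
  have hderiv : ∀ x : ℝ, 0 ≤ x → HasDerivAt G
      (α * (α - 1) * x * (1 + x) ^ (α - 2)
        - c * (2 * x * (1 + x) ^ (α - 2) + x ^ 2 * ((α - 2) * (1 + x) ^ (α - 3)))) x := by
    intro x hx
    exact (hasDerivAt_F α x (hpos x hx)).sub (hasDerivAt_Q α c x (hpos x hx))
  have hmono : MonotoneOn G (Set.Ici (0 : ℝ)) := by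
    apply monotoneOn_of_deriv_nonneg (convex_Ici 0)
    · intro x hx
      exact (hderiv x hx).continuousAt.continuousWithinAt
    · intro x hx
      rw [interior_Ici] at hx
      exact (hderiv x (le_of_lt hx)).differentiableAt.differentiableWithinAt
    · intro x hx
      rw [interior_Ici] at hx
      rw [(hderiv x (le_of_lt hx)).deriv]
      exact hsign x (le_of_lt hx)
  have h0 : G 0 = 0 := by simp [hGdef]
  have := hmono (Set.self_mem_Ici) (Set.mem_Ici.mpr hs) hs
  rw [h0] at this
  simp only [hGdef] at this
  linarith

/-- The pointwise Sacks–Uhlenbeck two-sided bound: for `1 ≤ α ≤ 2` and `s ≥ 0`,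
`(α/2)(α−1)s²(1+s)^{α−2} ≤ −(1+s)^α + 1 + α(1+s)^{α−1}s ≤ (α−1)s²(1+s)^{α−2}`. -/
theorem stmt_7 (α s : ℝ) (h1 : 1 ≤ α) (h2 : α ≤ 2) (hs : 0 ≤ s) :
    (α / 2) * (α - 1) * s ^ 2 * (1 + s) ^ (α - 2) ≤
      -(1 + s) ^ α + 1 + α * (1 + s) ^ (α - 1) * s ∧
    -(1 + s) ^ α + 1 + α * (1 + s) ^ (α - 1) * s ≤
      (α - 1) * s ^ 2 * (1 + s) ^ (α - 2) := by
  have hfacts : ∀ x : ℝ, 0 ≤ x → 0 < 1 + x ∧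
      (1 + x) ^ (α - 2) = (1 + x) ^ (α - 3) * (1 + x) ∧ 0 ≤ (1 + x) ^ (α - 3) := by
    intro x hx
    have hp : (0 : ℝ) < 1 + x := by linarith
    refine ⟨hp, ?_, (Real.rpow_pos_of_pos hp _).le⟩
    rw [show α - 2 = (α - 3) + 1 by ring, Real.rpow_add hp, Real.rpow_one]
  constructor
  · refine key α h1 h2 (α / 2 * (α - 1)) (by nlinarith) s hs ?_
    intro x hx
    obtain ⟨hp, e2, ht⟩ := hfacts x hx
    rw [e2]
    have hid : α * (α - 1) * x * ((1 + x) ^ (α - 3) * (1 + x))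
        - α / 2 * (α - 1) * (2 * x * ((1 + x) ^ (α - 3) * (1 + x)) + x ^ 2 * ((α - 2) * (1 + x) ^ (α - 3)))
        = α / 2 * (α - 1) * (2 - α) * x ^ 2 * (1 + x) ^ (α - 3) := by ring
    have hnn := mul_nonneg (mul_nonneg (mul_nonneg (mul_nonneg
      (by linarith : (0:ℝ) ≤ α / 2) (by linarith : (0:ℝ) ≤ α - 1))
      (by linarith : (0:ℝ) ≤ 2 - α)) (sq_nonneg x)) ht
    linarith
  · -- upper bound: show H = (α-1) s² (1+s)^(α-2) - F is nonneg via monotonicity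
    set H : ℝ → ℝ := fun y => (α - 1) * y ^ 2 * (1 + y) ^ (α - 2)
        - (-(1 + y) ^ α + 1 + α * (1 + y) ^ (α - 1) * y) with hHdef
    have hderiv : ∀ x : ℝ, 0 ≤ x → HasDerivAt H
        ((α - 1) * (2 * x * (1 + x) ^ (α - 2) + x ^ 2 * ((α - 2) * (1 + x) ^ (α - 3)))
          - α * (α - 1) * x * (1 + x) ^ (α - 2)) x := by
      intro x hx
      have hp : (0 : ℝ) < 1 + x := by linarith
      exact (hasDerivAt_Q α (α - 1) x hp).sub (hasDerivAt_F α x hp)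
    have hmono : MonotoneOn H (Set.Ici (0 : ℝ)) := by
      apply monotoneOn_of_deriv_nonneg (convex_Ici 0)
      · intro x hx
        exact (hderiv x hx).continuousAt.continuousWithinAt
      · intro x hx
        rw [interior_Ici] at hx
        exact (hderiv x (le_of_lt hx)).differentiableAt.differentiableWithinAt
      · intro x hx
        rw [interior_Ici] at hx
        rw [(hderiv x (le_of_lt hx)).deriv]
        obtain ⟨hp, e2, ht⟩ := hfacts x (le_of_lt hx)
        rw [e2]
        have hid : (α - 1) * (2 * x * ((1 + x) ^ (α - 3) * (1 + x)) + x ^ 2 * ((α - 2) * (1 + x) ^ (α - 3)))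
            - α * (α - 1) * x * ((1 + x) ^ (α - 3) * (1 + x))
            = (α - 1) * (2 - α) * x * (1 + x) ^ (α - 3) := by ring
        have hnn := mul_nonneg (mul_nonneg (mul_nonneg
          (by linarith : (0:ℝ) ≤ α - 1) (by linarith : (0:ℝ) ≤ 2 - α)) (le_of_lt hx)) ht
        linarith
    have h0 : H 0 = 0 := by simp [hHdef]
    have := hmono (Set.self_mem_Ici) (Set.mem_Ici.mpr hs) hs
    rw [h0] at this
    simp only [hHdef] at this
    linarith
end

section
/- Let K ≥ 1, let u be a continuously differentiable map from an open neighborhood of the closed unit disk D̄ into ℝ^K, and let α be real with 1 < α ≤ 2. Suppose ∫_D ( −(1 + |∇u(z)|²)^α + 1 + α(1 + |∇u(z)|²)^{α−1}|∇u(z)|² )·Im(z) dA(z) = 0. Then, writing D⁺ = {z ∈ D : Im z > 0} and D⁻ = {z ∈ D : Im z < 0}, one has (α/2)·∫_{D⁺} (1 + |∇u(z)|²)^{α−2}|∇u(z)|⁴·Im(z) dA(z) ≤ −∫_{D⁻} (1 + |∇u(z)|²)^{α−2}|∇u(z)|⁴·Im(z) dA(z). -/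
/-- Bernoulli for exponents in `[-1,0]`: `1 - q*s ≤ (1+s)^(-q)` for `0 ≤ q ≤ 1`, `0 ≤ s`. -/
lemma bern_low {q s : ℝ} (hq0 : 0 ≤ q) (hq1 : q ≤ 1) (hs : 0 ≤ s) :
    1 - q * s ≤ (1 + s) ^ (-q) := by
  have h1s : (0:ℝ) < 1 + s := by linarith
  have h1 : (1 + s) ^ q ≤ 1 + q * s :=
    rpow_one_add_le_one_add_mul_self (by linarith) hq0 hq1
  have hqs : (0:ℝ) < 1 + q * s := by nlinarith
  have hpow : (0:ℝ) < (1 + s) ^ q := Real.rpow_pos_of_pos h1s q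
  rw [Real.rpow_neg h1s.le]
  have h2 : ((1 + q * s))⁻¹ ≤ ((1 + s) ^ q)⁻¹ := by
    exact inv_anti₀ hpow h1
  have h3 : 1 - q * s ≤ (1 + q * s)⁻¹ := by
    rw [inv_eq_one_div, le_div_iff₀ hqs]
    nlinarith [sq_nonneg (q * s)]
  linarith

/-- Second-order Bernoulli: for `0 ≤ β ≤ 1`, `0 ≤ s`,
`1 + β s + (β(β-1)/2) s² ≤ (1+s)^β`. -/
lemma bern2 {β s : ℝ} (hβ0 : 0 ≤ β) (hβ1 : β ≤ 1) (hs : 0 ≤ s) :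
    1 + β * s + β * (β - 1) / 2 * s ^ 2 ≤ (1 + s) ^ β := by
  set h : ℝ → ℝ := fun x => (1 + x) ^ β - (1 + β * x + β * (β - 1) / 2 * x ^ 2) with hh
  have hderiv : ∀ x : ℝ, 0 ≤ x →
      HasDerivAt h (β * ((1 + x) ^ (β - 1) - (1 + (β - 1) * x))) x := by
    intro x hx
    have h1x : (0:ℝ) < 1 + x := by linarith
    have h1 : HasDerivAt (fun y : ℝ => 1 + y) 1 x := (hasDerivAt_id x).const_add 1
    have h2 : HasDerivAt (fun y : ℝ => (1 + y) ^ β) (1 * β * (1 + x) ^ (β - 1)) x :=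
      h1.rpow_const (Or.inl h1x.ne')
    have h4 : HasDerivAt (fun y : ℝ => β * y) β x := by
      simpa using (hasDerivAt_id x).const_mul β
    have h5 : HasDerivAt (fun y : ℝ => β * (β - 1) / 2 * y ^ 2)
        (β * (β - 1) / 2 * (2 * x)) x := by
      have h0 := (hasDerivAt_pow 2 x).const_mul (β * (β - 1) / 2)
      exact h0.congr_deriv (by norm_num)
    have h3 : HasDerivAt (fun y : ℝ => 1 + β * y + β * (β - 1) / 2 * y ^ 2)
        (β + β * (β - 1) / 2 * (2 * x)) x := by
      have := (h4.add h5).const_add 1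
      simpa [add_assoc] using this
    have := h2.sub h3
    exact this.congr_deriv (by ring)
  have hmono : MonotoneOn h (Set.Ici (0:ℝ)) := by
    apply monotoneOn_of_deriv_nonneg (convex_Ici 0)
    · exact fun x hx => ((hderiv x hx).continuousAt).continuousWithinAt
    · intro x hx
      rw [interior_Ici] at hx
      exact ((hderiv x (le_of_lt hx)).differentiableAt).differentiableWithinAt
    · intro x hx
      rw [interior_Ici] at hx
      rw [(hderiv x (le_of_lt hx)).deriv]
      have hb : 1 + (β - 1) * x ≤ (1 + x) ^ (β - 1) := by
        have := bern_low (q := 1 - β) (by linarith) (by linarith) (le_of_lt hx)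
        have he : -(1 - β) = β - 1 := by ring
        rw [he] at this
        linarith
      have : (0:ℝ) ≤ (1 + x) ^ (β - 1) - (1 + (β - 1) * x) := by linarith
      positivity
  have := hmono (Set.self_mem_Ici) (Set.mem_Ici.mpr hs) hs
  have h0 : h 0 = 0 := by simp [hh]
  simp only [hh] at this h0 ⊢
  linarith

/-- The pointwise two-sided Sacks–Uhlenbeck bound. -/
lemma sacks_uhlenbeck {α s : ℝ} (hα1 : 1 < α) (hα2 : α ≤ 2) (hs : 0 ≤ s) :
    α / 2 * (α - 1) * ((1 + s) ^ (α - 2) * s ^ 2) ≤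
      -(1 + s) ^ α + 1 + α * (1 + s) ^ (α - 1) * s ∧
    -(1 + s) ^ α + 1 + α * (1 + s) ^ (α - 1) * s ≤
      (α - 1) * ((1 + s) ^ (α - 2) * s ^ 2) := by
  set t : ℝ := 1 + s with ht
  have htpos : (0:ℝ) < t := by simp [ht]; linarith
  have hinv : t ^ (α - 2) * t ^ (2 - α) = 1 := by
    rw [← Real.rpow_add htpos]; norm_num
  have htα : t ^ α * t ^ (2 - α) = t ^ 2 := by
    rw [← Real.rpow_add htpos, show α + (2 - α) = (2:ℕ) by norm_num, Real.rpow_natCast]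
  have htα1 : t ^ (α - 1) * t ^ (2 - α) = t := by
    rw [← Real.rpow_add htpos, show α - 1 + (2 - α) = (1:ℝ) by ring, Real.rpow_one]
  have hβ0 : (0:ℝ) ≤ 2 - α := by linarith
  have hβ1 : 2 - α ≤ 1 := by linarith
  have hupper : t ^ (2 - α) ≤ 1 + (2 - α) * s :=
    rpow_one_add_le_one_add_mul_self (by linarith) hβ0 hβ1
  have hlower : 1 + (2 - α) * s + (2 - α) * (2 - α - 1) / 2 * s ^ 2 ≤ t ^ (2 - α) :=
    bern2 hβ0 hβ1 hs
  have hmulpos : (0:ℝ) < t ^ (α - 2) := Real.rpow_pos_of_pos htpos _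
  have hF : (-t ^ α + 1 + α * t ^ (α - 1) * s) =
      (-(t ^ 2) + t ^ (2 - α) + α * t * s) * t ^ (α - 2) := by
    have h1 : t ^ α = t ^ 2 * t ^ (α - 2) := by
      rw [← Real.rpow_natCast t 2, ← Real.rpow_add htpos]; norm_num
    have h2 : t ^ (α - 1) = t * t ^ (α - 2) := by
      nth_rewrite 2 [← Real.rpow_one t]
      rw [← Real.rpow_add htpos, show (1:ℝ) + (α - 2) = α - 1 by ring]
    have h3 : t ^ (2 - α) * t ^ (α - 2) = 1 := by
      rw [← Real.rpow_add htpos]; norm_num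
    calc -t ^ α + 1 + α * t ^ (α - 1) * s
        = -(t ^ 2 * t ^ (α - 2)) + t ^ (2 - α) * t ^ (α - 2)
          + α * (t * t ^ (α - 2)) * s := by rw [h1, h2, h3]
      _ = (-(t ^ 2) + t ^ (2 - α) + α * t * s) * t ^ (α - 2) := by ring
  constructor
  · rw [hF]
    have key : α / 2 * (α - 1) * s ^ 2 ≤ -(t ^ 2) + t ^ (2 - α) + α * t * s := by
      simp only [ht]; nlinarith [hlower]
    calc α / 2 * (α - 1) * (t ^ (α - 2) * s ^ 2)
        = (α / 2 * (α - 1) * s ^ 2) * t ^ (α - 2) := by ring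
      _ ≤ (-(t ^ 2) + t ^ (2 - α) + α * t * s) * t ^ (α - 2) :=
          mul_le_mul_of_nonneg_right key hmulpos.le
  · rw [hF]
    have key : -(t ^ 2) + t ^ (2 - α) + α * t * s ≤ (α - 1) * s ^ 2 := by
      simp only [ht]; nlinarith [hupper]
    calc (-(t ^ 2) + t ^ (2 - α) + α * t * s) * t ^ (α - 2)
        ≤ ((α - 1) * s ^ 2) * t ^ (α - 2) := mul_le_mul_of_nonneg_right key hmulpos.le
      _ = (α - 1) * (t ^ (α - 2) * s ^ 2) := by ring

lemma im_zero_null : MeasureTheory.volume {z : ℂ | z.im = 0} = 0 := by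
  have : {z : ℂ | z.im = 0} = (LinearMap.ker Complex.imLm : Set ℂ) := by
    ext z; simp [LinearMap.mem_ker, Complex.imLm]
  rw [this]
  apply MeasureTheory.Measure.addHaar_submodule
  rw [Ne, LinearMap.ker_eq_top]
  intro h
  have : Complex.imLm Complex.I = (0 : ℂ →ₗ[ℝ] ℝ) Complex.I := by rw [h]
  simp [Complex.imLm] at this

/-- From the vanishing of `∫_D ( −(1+|∇u|²)^α + 1 + α(1+|∇u|²)^{α−1}|∇u|² )·Im z dA`
and the pointwise Sacks–Uhlenbeck bound one gets, for `1 < α ≤ 2`,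
`(α/2)·∫_{D⁺} (1+|∇u|²)^{α−2}|∇u|⁴·Im z dA ≤ −∫_{D⁻} (1+|∇u|²)^{α−2}|∇u|⁴·Im z dA`. -/
theorem stmt_9 (K : ℕ) (hK : 1 ≤ K) (u : ℂ → EuclideanSpace ℝ (Fin K)) (V : Set ℂ)
    (hV : IsOpen V) (hDV : Metric.closedBall (0 : ℂ) 1 ⊆ V) (hu : ContDiffOn ℝ 1 u V)
    (α : ℝ) (hα1 : 1 < α) (hα2 : α ≤ 2)
    (h : (∫ z in Metric.ball (0 : ℂ) 1,
        (-(1 + gradSq u z) ^ α + 1 + α * (1 + gradSq u z) ^ (α - 1) * gradSq u z)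
          * z.im) = 0) :
    (α / 2) * ∫ z in {z ∈ Metric.ball (0 : ℂ) 1 | 0 < z.im},
        (1 + gradSq u z) ^ (α - 2) * gradSq u z ^ 2 * z.im ≤
      -∫ z in {z ∈ Metric.ball (0 : ℂ) 1 | z.im < 0},
        (1 + gradSq u z) ^ (α - 2) * gradSq u z ^ 2 * z.im := by
  classical
  set B1 := Metric.ball (0 : ℂ) 1 with hB1
  set F : ℂ → ℝ := fun z =>
    (-(1 + gradSq u z) ^ α + 1 + α * (1 + gradSq u z) ^ (α - 1) * gradSq u z) * z.im with hFdef
  set G : ℂ → ℝ := fun z =>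
    (1 + gradSq u z) ^ (α - 2) * gradSq u z ^ 2 * z.im with hGdef
  set A : Set ℂ := {z ∈ B1 | 0 < z.im} with hAdef
  set B : Set ℂ := {z ∈ B1 | z.im < 0} with hBdef
  have hgpos : ∀ z : ℂ, 0 ≤ gradSq u z := fun z =>
    add_nonneg (pow_nonneg (norm_nonneg _) 2) (pow_nonneg (norm_nonneg _) 2)
  have h1pos : ∀ z : ℂ, (0:ℝ) < 1 + gradSq u z := fun z => by
    have := hgpos z; linarith
  -- continuity
  have hgc : ContinuousOn (gradSq u) V := by
    have hf : ContinuousOn (fderiv ℝ u) V :=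
      hu.continuousOn_fderiv_of_isOpen hV le_rfl
    exact (((hf.clm_apply continuousOn_const).norm.pow 2).add
      ((hf.clm_apply continuousOn_const).norm.pow 2))
  have h1c : ContinuousOn (fun z => 1 + gradSq u z) V := continuousOn_const.add hgc
  have hrpow : ∀ p : ℝ, ContinuousOn (fun z => (1 + gradSq u z) ^ p) V := fun p =>
    h1c.rpow_const (fun z _ => Or.inl (h1pos z).ne')
  have hFc : ContinuousOn F V := by
    exact (((hrpow α).neg.add continuousOn_const).add
      ((continuousOn_const.mul (hrpow (α - 1))).mul hgc)).mul
      Complex.continuous_im.continuousOn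
  have hGc : ContinuousOn G V := by
    exact ((hrpow (α - 2)).mul (hgc.pow 2)).mul Complex.continuous_im.continuousOn
  -- integrability on the ball
  have hiF : MeasureTheory.IntegrableOn F B1 := by
    have h0 : MeasureTheory.IntegrableOn F (Metric.closedBall (0:ℂ) 1) MeasureTheory.volume :=
      (hFc.mono hDV).integrableOn_compact (isCompact_closedBall (0:ℂ) 1)
    exact h0.mono_set Metric.ball_subset_closedBall
  have hiG : MeasureTheory.IntegrableOn G B1 := by
    have h0 : MeasureTheory.IntegrableOn G (Metric.closedBall (0:ℂ) 1) MeasureTheory.volume :=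
      (hGc.mono hDV).integrableOn_compact (isCompact_closedBall (0:ℂ) 1)
    exact h0.mono_set Metric.ball_subset_closedBall
  have hAsub : A ⊆ B1 := fun z hz => hz.1
  have hBsub : B ⊆ B1 := fun z hz => hz.1
  have hAopen : IsOpen A := by
    have : A = B1 ∩ (Complex.im ⁻¹' Set.Ioi 0) := by
      ext z
      simp only [hAdef, Set.mem_setOf_eq, Set.mem_inter_iff, Set.mem_preimage, Set.mem_Ioi]
    rw [this]
    exact Metric.isOpen_ball.inter (isOpen_Ioi.preimage Complex.continuous_im)
  have hBopen : IsOpen B := by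
    have : B = B1 ∩ (Complex.im ⁻¹' Set.Iio 0) := by
      ext z
      simp only [hBdef, Set.mem_setOf_eq, Set.mem_inter_iff, Set.mem_preimage, Set.mem_Iio]
    rw [this]
    exact Metric.isOpen_ball.inter (isOpen_Iio.preimage Complex.continuous_im)
  have hAmeas : MeasurableSet A := hAopen.measurableSet
  have hBmeas : MeasurableSet B := hBopen.measurableSet
  -- split the integral over the ball
  have hae : B1 =ᵐ[MeasureTheory.volume] (A ∪ B : Set ℂ) := by
    rw [MeasureTheory.ae_eq_set]
    constructor
    · refine MeasureTheory.measure_mono_null ?_ im_zero_null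
      intro z hz
      · 
        simp only [Set.mem_diff, Set.mem_union, hAdef, hBdef, Set.mem_setOf_eq] at hz
        have h1 := hz.1
        have h2 := hz.2
        push_neg at h2
        simp only [Set.mem_setOf_eq]
        have := h2.1 h1
        have := h2.2 h1
        linarith
    · have : (A ∪ B) \ B1 = ∅ := by
        rw [Set.diff_eq_empty]
        exact Set.union_subset hAsub hBsub
      rw [this]; simp
  have hABdisj : Disjoint A B := by
    rw [Set.disjoint_left]
    intro z hzA hzB
    exact absurd hzA.2 (not_lt.mpr hzB.2.le)
  have hsplit : (∫ z in B1, F z) = (∫ z in A, F z) + ∫ z in B, F z := by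
    rw [MeasureTheory.setIntegral_congr_set hae]
    exact MeasureTheory.setIntegral_union hABdisj hBmeas (hiF.mono_set hAsub)
      (hiF.mono_set hBsub)
  -- pointwise bounds
  have hptA : ∀ z ∈ A, α / 2 * (α - 1) * G z ≤ F z := by
    intro z hz
    have him : 0 < z.im := hz.2
    have key := (sacks_uhlenbeck hα1 hα2 (hgpos z)).1
    have := mul_le_mul_of_nonneg_right key him.le
    calc α / 2 * (α - 1) * G z
        = (α / 2 * (α - 1) * ((1 + gradSq u z) ^ (α - 2) * gradSq u z ^ 2)) * z.im := by
          simp only [hGdef]; ring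
      _ ≤ (-(1 + gradSq u z) ^ α + 1 + α * (1 + gradSq u z) ^ (α - 1) * gradSq u z) * z.im :=
          this
      _ = F z := rfl
  have hptB : ∀ z ∈ B, (α - 1) * G z ≤ F z := by
    intro z hz
    have him : z.im < 0 := hz.2
    have key := (sacks_uhlenbeck hα1 hα2 (hgpos z)).2
    have := mul_le_mul_of_nonpos_right key him.le
    calc (α - 1) * G z
        = ((α - 1) * ((1 + gradSq u z) ^ (α - 2) * gradSq u z ^ 2)) * z.im := by
          simp only [hGdef]; ring
      _ ≤ (-(1 + gradSq u z) ^ α + 1 + α * (1 + gradSq u z) ^ (α - 1) * gradSq u z) * z.im :=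
          this
      _ = F z := rfl
  -- integral inequalities
  have hIA : α / 2 * (α - 1) * (∫ z in A, G z) ≤ ∫ z in A, F z := by
    rw [← MeasureTheory.integral_const_mul]
    exact MeasureTheory.setIntegral_mono_on
      ((hiG.mono_set hAsub).const_mul _) (hiF.mono_set hAsub) hAmeas hptA
  have hIB : (α - 1) * (∫ z in B, G z) ≤ ∫ z in B, F z := by
    rw [← MeasureTheory.integral_const_mul]
    exact MeasureTheory.setIntegral_mono_on
      ((hiG.mono_set hBsub).const_mul _) (hiF.mono_set hBsub) hBmeas hptB
  -- combine
  have hFA : (∫ z in A, F z) = -∫ z in B, F z := by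
    have := h
    rw [hsplit] at this
    linarith
  have hα1' : (0:ℝ) < α - 1 := by linarith
  have hfinal : (α - 1) * ((α / 2) * ∫ z in A, G z) ≤ (α - 1) * (-∫ z in B, G z) := by
    calc (α - 1) * ((α / 2) * ∫ z in A, G z)
        = α / 2 * (α - 1) * (∫ z in A, G z) := by ring
      _ ≤ ∫ z in A, F z := hIA
      _ = -∫ z in B, F z := hFA
      _ ≤ -((α - 1) * ∫ z in B, G z) := by linarith
      _ = (α - 1) * (-∫ z in B, G z) := by ring
  exact le_of_mul_le_mul_left hfinal hα1'
end
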